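/- Let X be a real Hilbert space and H : X → X a bounded self-adjoint operator whose spectrum consists of a simple negative eigenvalue -μ² with unit eigenvector χ, a simple zero eigenvalue with eigenvector e, and a remaining part Σ ⊂ (0,∞) bounded away from 0 (so that ⟨Hv,v⟩ ≥ α‖v‖² on the positive spectral subspace X₊ for some α > 0). Suppose y ∈ X satisfies ⟨Hy,y⟩ < 0. Then there exists α̃ > 0 such that ⟨Hv,v⟩ ≥ α̃‖v‖² for every v ∈ X with ⟨Hy,v⟩ = 0 and ⟨e,v⟩ = 0. -/

import Mathlib

open RealInnerProductSpace

/-- Coercivity of a self-adjoint operator on the orthogonal complement of a negative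
direction and the kernel direction. -/
theorem stmt0 {X : Type*} [NormedAddCommGroup X] [InnerProductSpace ℝ X] [CompleteSpace X]
    (H : X →L[ℝ] X) (hsa : ∀ u v : X, (inner ℝ (H u) (v) : ℝ) = (inner ℝ (u) (H v) : ℝ))
    (μ : ℝ) (hμ : 0 < μ) (χ e : X) (hχnorm : ‖χ‖ = 1)
    (Xplus : Submodule ℝ X)
    (hHχ : H χ = (-μ ^ 2) • χ) (hHe : H e = 0)
    (hχe : (inner ℝ (χ) (e) : ℝ) = 0)
    (hχp : ∀ p ∈ Xplus, (inner ℝ (χ) (p) : ℝ) = 0)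
    (hep : ∀ p ∈ Xplus, (inner ℝ (e) (p) : ℝ) = 0)
    (α : ℝ) (hα : 0 < α)
    (hcoer : ∀ p ∈ Xplus, α * ‖p‖ ^ 2 ≤ (inner ℝ (H p) (p) : ℝ))
    (hdecomp : ∀ v : X, ∃ a b : ℝ, ∃ p ∈ Xplus, v = a • χ + b • e + p)
    (y : X) (hy : (inner ℝ (H y) (y) : ℝ) < 0) :
    ∃ αt > 0, ∀ v : X, (inner ℝ (H y) (v) : ℝ) = 0 → (inner ℝ (e) (v) : ℝ) = 0 →
      αt * ‖v‖ ^ 2 ≤ (inner ℝ (H v) (v) : ℝ) := by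
  have hχχ : (inner ℝ χ χ : ℝ) = 1 := by
    rw [real_inner_self_eq_norm_sq, hχnorm]; norm_num
  -- key expansion of the quadratic form
  have key : ∀ (a b : ℝ) (p : X), p ∈ Xplus → ∀ (c d : ℝ) (q : X), q ∈ Xplus →
      (inner ℝ (H (a • χ + b • e + p)) (c • χ + d • e + q) : ℝ)
        = -(μ^2) * (a*c) + (inner ℝ (H p) q : ℝ) := by
    intro a b p hp c d q hq
    have hH : H (a • χ + b • e + p) = (-(μ^2) * a) • χ + H p := by
      simp [map_add, map_smul, hHχ, hHe, smul_smul, mul_comm]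
    have h1 : (inner ℝ (H p) χ : ℝ) = 0 := by
      rw [hsa, hHχ, real_inner_smul_right, real_inner_comm, hχp p hp, mul_zero]
    have h2 : (inner ℝ (H p) e : ℝ) = 0 := by
      rw [hsa, hHe, inner_zero_right]
    rw [hH]
    simp only [inner_add_left, inner_add_right, real_inner_smul_left, real_inner_smul_right,
      hχχ, hχe, hχp q hq, h1, h2]
    ring
  -- norm expansion
  have keyN : ∀ (c d : ℝ) (q : X), q ∈ Xplus →
      ‖c • χ + d • e + q‖^2 = c^2 + d^2 * ‖e‖^2 + ‖q‖^2 := by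
    intro c d q hq
    have heχ : (inner ℝ e χ : ℝ) = 0 := by rw [real_inner_comm]; exact hχe
    have hqχ : (inner ℝ q χ : ℝ) = 0 := by rw [real_inner_comm]; exact hχp q hq
    have hqe : (inner ℝ q e : ℝ) = 0 := by rw [real_inner_comm]; exact hep q hq
    have h := real_inner_self_eq_norm_sq (c • χ + d • e + q)
    simp only [inner_add_left, inner_add_right, real_inner_smul_left, real_inner_smul_right,
      hχχ, hχe, hχp q hq, heχ, hqχ, hqe, hep q hq] at h
    rw [← h, real_inner_self_eq_norm_sq e, real_inner_self_eq_norm_sq q]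
    ring
  -- Cauchy-Schwarz for the positive form on Xplus
  have CS : ∀ p ∈ Xplus, ∀ q ∈ Xplus,
      (inner ℝ (H p) q : ℝ)^2 ≤ (inner ℝ (H p) p : ℝ) * (inner ℝ (H q) q : ℝ) := by
    intro p hp q hq
    have hpos : ∀ x : ℝ, 0 ≤ (inner ℝ (H q) q : ℝ) * (x*x) + (2 * (inner ℝ (H p) q : ℝ)) * x
        + (inner ℝ (H p) p : ℝ) := by
      intro x
      have hmem : p + x • q ∈ Xplus := Xplus.add_mem hp (Xplus.smul_mem x hq)
      have h0 : (0:ℝ) ≤ α * ‖p + x • q‖^2 := by positivity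
      have h1 := hcoer _ hmem
      have hqp : (inner ℝ (H q) p : ℝ) = (inner ℝ (H p) q : ℝ) := by
        rw [hsa, real_inner_comm]
      have hexp : (inner ℝ (H (p + x • q)) (p + x • q) : ℝ)
          = (inner ℝ (H q) q : ℝ) * (x*x) + (2 * (inner ℝ (H p) q : ℝ)) * x
            + (inner ℝ (H p) p : ℝ) := by
        simp only [map_add, map_smul, inner_add_left, inner_add_right,
          real_inner_smul_left, real_inner_smul_right, ContinuousLinearMap.coe_smul',
          Pi.smul_apply, smul_eq_mul, hqp]
        ring
      linarith [hexp ▸ le_trans h0 h1]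
    have hd := discrim_le_zero hpos
    rw [discrim] at hd
    nlinarith [hd]
  -- decompose y
  obtain ⟨a, b, p, hp, hy_eq⟩ := hdecomp y
  set P : ℝ := (inner ℝ (H p) p : ℝ) with hP
  have hyy : (inner ℝ (H y) y : ℝ) = -(μ^2) * (a*a) + P := by
    rw [hy_eq]; exact key a b p hp a b p hp
  set δ : ℝ := -(inner ℝ (H y) y : ℝ) with hδ
  have hδpos : 0 < δ := by simp [hδ]; linarith
  have hPnn : 0 ≤ P := le_trans (by positivity) (hcoer p hp)
  set A : ℝ := μ^2 * a^2 with hA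
  have hAδ : A = P + δ := by rw [hA, hδ, hyy]; ring
  have hApos : 0 < A := by rw [hAδ]; linarith
  set m : ℝ := min α (μ^2) with hm
  have hm0 : 0 < m := lt_min hα (by positivity)
  have hmα : m ≤ α := min_le_left _ _
  have hmμ : m ≤ μ^2 := min_le_right _ _
  refine ⟨δ / (4 * A) * m, by positivity, ?_⟩
  intro v hv1 hv2
  obtain ⟨c, d, q, hq, hv_eq⟩ := hdecomp v
  set S : ℝ := (inner ℝ (H q) q : ℝ) with hS
  have hSq : α * ‖q‖^2 ≤ S := hcoer q hq
  have hSnn : 0 ≤ S := le_trans (by positivity) hSq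
  -- the e-component of v vanishes in norm
  have hde : d * ‖e‖^2 = 0 := by
    have heχ : (inner ℝ e χ : ℝ) = 0 := by rw [real_inner_comm]; exact hχe
    rw [hv_eq] at hv2
    simp only [inner_add_right, real_inner_smul_right, heχ, hep q hq,
      real_inner_self_eq_norm_sq] at hv2
    linarith
  have hnv : ‖v‖^2 = c^2 + ‖q‖^2 := by
    rw [hv_eq, keyN c d q hq]
    have : d^2 * ‖e‖^2 = d * (d * ‖e‖^2) := by ring
    rw [this, hde]; ring
  -- constraint
  have hcon : -(μ^2) * (a*c) + (inner ℝ (H p) q : ℝ) = 0 := by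
    rw [hv_eq] at hv1; rw [← hv1, hy_eq]; exact (key a b p hp c d q hq).symm
  have hHvv : (inner ℝ (H v) v : ℝ) = -(μ^2) * (c*c) + S := by
    rw [hv_eq]; exact key c d q hq c d q hq
  -- Cauchy-Schwarz consequence: A * (μ^2 c^2) ≤ P * S
  have hcs : A * (μ^2 * c^2) ≤ P * S := by
    have hcs0 := CS p hp q hq
    have hpq : (inner ℝ (H p) q : ℝ) = μ^2 * (a*c) := by linarith
    rw [hpq] at hcs0
    have hid : A * (μ^2 * c^2) = (μ^2 * (a*c))^2 := by rw [hA]; ring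
    linarith [hid ▸ hcs0]
  -- t ≤ S
  have htS : μ^2 * c^2 ≤ S := by
    have h1 : A * (μ^2 * c^2) ≤ A * S := by
      refine le_trans hcs ?_
      have : P * S ≤ A * S := mul_le_mul_of_nonneg_right (by linarith [hAδ]) hSnn
      linarith
    exact le_of_mul_le_mul_left h1 hApos
  have hc2 : (0:ℝ) ≤ c^2 := by positivity
  have hq2 : (0:ℝ) ≤ ‖q‖^2 := by positivity
  -- product estimates
  have e1 : δ * m * c^2 ≤ δ * (μ^2 * c^2) := by
    rw [mul_assoc]
    exact mul_le_mul_of_nonneg_left (mul_le_mul_of_nonneg_right hmμ hc2) hδpos.le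
  have e2 : δ * m * ‖q‖^2 ≤ δ * (α * ‖q‖^2) := by
    rw [mul_assoc]
    exact mul_le_mul_of_nonneg_left (mul_le_mul_of_nonneg_right hmα hq2) hδpos.le
  have e3 : δ * (α * ‖q‖^2) ≤ δ * S := mul_le_mul_of_nonneg_left hSq hδpos.le
  have e4 : δ * (μ^2 * c^2) ≤ δ * S := mul_le_mul_of_nonneg_left htS hδpos.le
  have e5 : 0 ≤ δ * S := by positivity
  -- main inequality, cleared of division
  have hmain : δ * m * (c^2 + ‖q‖^2) ≤ 4 * A * (S - μ^2 * c^2) := by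
    have h4 : 4 * (A * (μ^2 * c^2)) ≤ 4 * (P * S) := by linarith
    have hPA : P * S = A * S - δ * S := by rw [hAδ]; ring
    linarith [h4, hPA, e1, e2, e3, e4, e5]
  rw [hnv, hHvv]
  rw [div_mul_eq_mul_div, div_mul_eq_mul_div, div_le_iff₀ (by positivity : (0:ℝ) < 4 * A)]
  linarith [hmain]
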